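/- Let k be a field, G a finite cyclic group, and 0 → A → B → C → 0 a short exact sequence of finite-dimensional k-linear representations of G. Suppose the induced surjection of dual representations r : B* → A* admits a G-equivariant set-theoretic section, i.e., a function t : A* → B* (not necessarily linear) with r ∘ t = id and t(g·f) = g·t(f) for all g ∈ G, f ∈ A*. Then the connecting homomorphism C^G → H¹(G, A), which sends c ∈ C^G to the class of the 1-cocycle g ↦ g·b − b for any b ∈ B mapping to c, is the zero map. -/

import Mathlib

/-- If a vector fixed by a generator of a cyclic group is fixed by the whole group. -/
lemma self_cup_stmt_13_fix_all {k G V : Type} [Field k] [Group G]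
    [AddCommGroup V] [Module k V]
    (ρ : Representation k G V) (σ : G) (hσ : ∀ x : G, x ∈ Subgroup.zpowers σ)
    (v : V) (hv : ρ σ v = v) : ∀ γ : G, ρ γ v = v := by
  have hinv : ρ σ⁻¹ v = v := by
    have : ρ σ⁻¹ (ρ σ v) = v := by
      rw [← Module.End.mul_apply, ← map_mul, inv_mul_cancel, map_one, Module.End.one_apply]
    rwa [hv] at this
  have H : ∀ n : ℤ, ρ (σ ^ n) v = v := by
    intro n
    induction n using Int.induction_on with
    | zero => simp
    | succ n ih =>
        rw [zpow_add_one, map_mul, Module.End.mul_apply, hv, ih]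
    | pred n ih =>
        rw [zpow_sub_one, map_mul, Module.End.mul_apply, hinv, ih]
  intro γ
  obtain ⟨n, rfl⟩ := Subgroup.mem_zpowers_iff.mp (hσ γ)
  exact H n

/-- (Lemma 3.2(b).)  Let `k` be a field, `G` a finite cyclic group, and
`0 → A → B → C → 0` a short exact sequence of finite-dimensional `k`-linear
representations of `G`.  If the induced surjection of dual representations
`B* → A*` admits a `G`-equivariant set-theoretic section, then the connecting
homomorphism `C^G → H¹(G, A)` is zero: every `c ∈ C^G` lifts, after choosing any
`b ∈ B` mapping to it, to a coboundary, i.e. there is `a ∈ A` with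
`γ·b − b = f(γ·a − a)` for all `γ ∈ G`. -/
theorem self_cup_stmt_13 (k : Type) [Field k] (G : Type) [Group G] [Finite G]
    (hG : IsCyclic G)
    (A B C : Type) [AddCommGroup A] [Module k A] [FiniteDimensional k A]
    [AddCommGroup B] [Module k B] [FiniteDimensional k B]
    [AddCommGroup C] [Module k C] [FiniteDimensional k C]
    (ρA : Representation k G A) (ρB : Representation k G B)
    (ρC : Representation k G C)
    (f : A →ₗ[k] B) (g : B →ₗ[k] C)
    (hfequiv : ∀ (γ : G) (a : A), f (ρA γ a) = ρB γ (f a))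
    (hgequiv : ∀ (γ : G) (b : B), g (ρB γ b) = ρC γ (g b))
    (hfinj : Function.Injective f) (hgsurj : Function.Surjective g)
    (hexact : LinearMap.range f = LinearMap.ker g)
    -- a `G`-equivariant set-theoretic section of the dual surjection `B* → A*`
    -- (which is precomposition with `f`):
    (t : Module.Dual k A → Module.Dual k B)
    (hsection : ∀ φ : Module.Dual k A, f.dualMap (t φ) = φ)
    (htequiv : ∀ (γ : G) (φ : Module.Dual k A),
      t (ρA.dual γ φ) = ρB.dual γ (t φ)) :
    ∀ c : C, (∀ γ : G, ρC γ c = c) →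
      ∀ b : B, g b = c →
        ∃ a : A, ∀ γ : G, ρB γ b - b = f (ρA γ a - a) := by
  intro c hc b hb
  obtain ⟨σ, hσ0⟩ := hG
  have hσ : ∀ x : G, x ∈ Subgroup.zpowers σ := fun x => Subgroup.mem_zpowers_iff.mpr (hσ0 x)
  set L : B →ₗ[k] B := ρB σ - LinearMap.id with hLdef
  set S : Submodule k B := LinearMap.ker L ⊔ LinearMap.range f with hSdef
  -- main duality step: every functional vanishing on S vanishes on b
  have main : ∀ φ : Module.Dual k B, (∀ s ∈ S, φ s = 0) → φ b = 0 := by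
    intro φ hφ
    have hφW : φ ∈ (LinearMap.ker L).dualAnnihilator := by
      rw [Submodule.mem_dualAnnihilator]
      intro w hw
      exact hφ w (Submodule.mem_sup_left hw)
    rw [← LinearMap.range_dualMap_eq_dualAnnihilator_ker] at hφW
    obtain ⟨ψ, rfl⟩ := hφW
    have hφ_apply : ∀ x : B, L.dualMap ψ x = ψ (ρB σ x) - ψ x := by
      intro x
      simp [hLdef, LinearMap.dualMap_apply, map_sub]
    -- χ₀ := f.dualMap ψ is G-invariant for the dual representation
    set χ₀ : Module.Dual k A := f.dualMap ψ with hχ₀def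
    have hχσ : ∀ a : A, ψ (f (ρA σ a)) = ψ (f a) := by
      intro a
      have h0 : L.dualMap ψ (f a) = 0 :=
        hφ (f a) (Submodule.mem_sup_right ⟨a, rfl⟩)
      rw [hφ_apply] at h0
      have : ψ (ρB σ (f a)) = ψ (f a) := sub_eq_zero.mp h0
      rwa [← hfequiv] at this
    have hχinv_σ : ρA.dual σ χ₀ = χ₀ := by
      ext a
      have := hχσ (ρA σ⁻¹ a)
      have h2 : ρA σ (ρA σ⁻¹ a) = a := by
        rw [← Module.End.mul_apply, ← map_mul, mul_inv_cancel, map_one, Module.End.one_apply]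
      rw [h2] at this
      simpa [hχ₀def, Representation.dual] using this.symm
    have hχinv : ∀ γ : G, ρA.dual γ χ₀ = χ₀ :=
      self_cup_stmt_13_fix_all ρA.dual σ hσ χ₀ hχinv_σ
    -- β := t χ₀ is a G-invariant lift of χ₀
    set β : Module.Dual k B := t χ₀ with hβdef
    have hβinv : ∀ γ : G, ρB.dual γ β = β := by
      intro γ
      rw [hβdef, ← htequiv, hχinv]
    have hβcomp : ∀ (γ : G) (x : B), β (ρB γ x) = β x := by
      intro γ x
      have := LinearMap.congr_fun (hβinv γ⁻¹) x
      simpa [Representation.dual] using this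
    have hβsec : f.dualMap β = χ₀ := hsection χ₀
    -- ψ - β kills range f = ker g, hence factors through g
    have hker : ψ - β ∈ LinearMap.ker (f.dualMap) := by
      rw [LinearMap.mem_ker, map_sub, hβsec, hχ₀def, sub_self]
    rw [LinearMap.ker_dualMap_eq_dualAnnihilator_range, hexact,
      ← LinearMap.range_dualMap_eq_dualAnnihilator_ker] at hker
    obtain ⟨η, hη⟩ := hker
    have hψ : ∀ x : B, ψ x = β x + η (g x) := by
      intro x
      have := LinearMap.congr_fun hη x
      simp only [LinearMap.dualMap_apply, LinearMap.sub_apply] at this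
      linear_combination -this
    rw [hφ_apply, hψ (ρB σ b), hψ b, hβcomp σ b, hgequiv, hb, hc σ]
    ring
  -- conclude b ∈ S via the quotient
  have hbS : b ∈ S := by
    rw [← Submodule.Quotient.mk_eq_zero S,
      ← Module.forall_dual_apply_eq_zero_iff k (Submodule.Quotient.mk b : B ⧸ S)]
    intro ψ
    have : S.mkQ b = Submodule.Quotient.mk b := rfl
    rw [← this, ← LinearMap.comp_apply]
    exact main (ψ.comp S.mkQ) (fun s hs => by
      simp [LinearMap.comp_apply, (Submodule.Quotient.mk_eq_zero S).mpr hs,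
        Submodule.mkQ_apply])
  obtain ⟨w, hw, v, hv, hwv⟩ := Submodule.mem_sup.mp hbS
  obtain ⟨a₀, rfl⟩ := hv
  -- w is fixed by σ, hence by all of G
  have hwσ : ρB σ w = w := by
    have := LinearMap.mem_ker.mp hw
    rw [hLdef] at this
    have h2 : ρB σ w - w = 0 := by simpa using this
    exact sub_eq_zero.mp h2
  have hwall : ∀ γ : G, ρB γ w = w :=
    self_cup_stmt_13_fix_all ρB σ hσ w hwσ
  refine ⟨a₀, fun γ => ?_⟩
  rw [← hwv, map_add, hwall γ, ← hfequiv, map_sub]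
  abel
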